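/- In the semidihedral group SD_{2^n} with n ≥ 4, every subgroup Q of order at least 8 contains an element of the cyclic subgroup ⟨x⟩ distinct from the identity and from the central involution z = x^{2^{n-2}}. -/

import Mathlib

/-- In `SD_{2^n}` (n ≥ 4), every subgroup of order at least 8 contains an element
of `⟨x⟩` other than the identity and the central involution `z = x^(2^(n-2))`. -/
theorem sd_subgroup_card_ge_eight {G : Type*} [Group G] [Finite G] (n : ℕ) (hn : 4 ≤ n) (x y : G)
    (hG : Nat.card G = 2 ^ n) (hx : orderOf x = 2 ^ (n - 1)) (hy : y ^ 2 = 1)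
    (hxy : y⁻¹ * x * y = x ^ (2 ^ (n - 2) - 1)) (Q : Subgroup G) (hQ : 8 ≤ Nat.card Q) :
    ∃ g ∈ Q, g ∈ Subgroup.zpowers x ∧ g ≠ 1 ∧ g ≠ x ^ 2 ^ (n - 2) := by
  set H := Subgroup.zpowers x with hH
  have hcardH : Nat.card H = 2 ^ (n - 1) := by rw [Nat.card_zpowers, hx]
  have hindex : H.index = 2 := by
    have h1 := H.index_mul_card
    rw [hcardH, hG] at h1
    have h2 : 2 ^ n = 2 * 2 ^ (n - 1) := by
      rw [← pow_succ']
      congr 1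
      omega
    have hpos : 0 < 2 ^ (n - 1) := Nat.pow_pos (by norm_num)
    exact Nat.eq_of_mul_eq_mul_right hpos (h1.trans h2)
  have hrelpos : H.relIndex Q ≠ 0 := Subgroup.index_ne_zero_of_finite
  have hrel2 : H.relIndex Q ≤ 2 := by
    have := Subgroup.relIndex_le_of_le_right (le_top : Q ≤ ⊤)
      (by rw [Subgroup.relIndex_top_right, hindex]; norm_num : H.relIndex (⊤ : Subgroup G) ≠ 0)
    rwa [Subgroup.relIndex_top_right, hindex] at this
  have hmul : H.relIndex Q * Nat.card (H.subgroupOf Q) = Nat.card Q :=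
    Subgroup.index_mul_card (H.subgroupOf Q)
  have hcard4 : 4 ≤ Nat.card (H.subgroupOf Q) := by
    by_contra hlt
    push_neg at hlt
    interval_cases h : (H.relIndex Q) <;> omega
  -- pigeonhole: H.subgroupOf Q has ≥ 4 elements, {1, z} has ≤ 2
  by_contra hcon
  push_neg at hcon
  set z := x ^ 2 ^ (n - 2) with hz
  have hsub : ∀ g : H.subgroupOf Q, ((g : Q) : G) ∈ ({1, z} : Set G) := by
    intro g
    rcases eq_or_ne ((g : Q) : G) 1 with h1 | h1
    · exact Or.inl h1
    · exact Or.inr (hcon _ (g : Q).2 g.2 h1)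
  have hinj : Function.Injective
      (fun g : H.subgroupOf Q => (⟨((g : Q) : G), hsub g⟩ : ({1, z} : Set G))) := by
    intro a b hab
    have h := congrArg Subtype.val hab
    simp only at h
    exact Subtype.ext (Subtype.ext h)
  have hle : Nat.card (H.subgroupOf Q) ≤ Nat.card ({1, z} : Set G) :=
    Nat.card_le_card_of_injective _ hinj
  have h2 : Nat.card ({1, z} : Set G) ≤ 2 := by
    rw [Nat.card_coe_set_eq]
    calc ({1, z} : Set G).ncard ≤ ({z} : Set G).ncard + 1 := Set.ncard_insert_le _ _
    _ = 2 := by rw [Set.ncard_singleton]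
  omega
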